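/- Let A be an n×n Hermitian matrix, β > 0, and z ∈ ℂⁿ with ‖z‖₂ = 1 a stationary point of f(z) = (1/2) z* A z + (β/2) Σₖ |zₖ|⁴ on the complex unit sphere, with multiplier λ = (1/2) z* A z + β Σₖ |zₖ|⁴, i.e. A z + 2β diag(|z|²) z = 2λ z. If the Hermitian matrix H = A + 2β diag(|z|²) − 2λ I is positive semidefinite, then for every y ∈ ℂⁿ with ‖y‖₂ = 1 we have f(y) ≥ f(z); that is, z is a global minimizer. -/

import Mathlib

open Matrix Finset
open scoped ComplexOrder

theorem stmt0 {n : ℕ} (A : Matrix (Fin n) (Fin n) ℂ) (hA : A.IsHermitian)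
    (β : ℝ) (hβ : 0 < β) (z : Fin n → ℂ) (hz : ∑ k, ‖z k‖ ^ 2 = 1)
    (lam : ℝ)
    (hlam : lam = (1 / 2) * (star z ⬝ᵥ A.mulVec z).re + β * ∑ k, ‖z k‖ ^ 4)
    (hstat : ∀ k, A.mulVec z k + ((2 * β * ‖z k‖ ^ 2 : ℝ) : ℂ) * z k
      = ((2 * lam : ℝ) : ℂ) * z k)
    (hH : (A + (2 * β) • Matrix.diagonal (fun k => ((‖z k‖ ^ 2 : ℝ) : ℂ))
        - (2 * lam) • (1 : Matrix (Fin n) (Fin n) ℂ)).PosSemidef) :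
    ∀ y : Fin n → ℂ, ∑ k, ‖y k‖ ^ 2 = 1 →
      (1 / 2) * (star z ⬝ᵥ A.mulVec z).re + (β / 2) * ∑ k, ‖z k‖ ^ 4 ≤
      (1 / 2) * (star y ⬝ᵥ A.mulVec y).re + (β / 2) * ∑ k, ‖y k‖ ^ 4 := by
  intro y hy
  set Hmat := A + (2 * β) • Matrix.diagonal (fun k => ((‖z k‖ ^ 2 : ℝ) : ℂ))
      - (2 * lam) • (1 : Matrix (Fin n) (Fin n) ℂ) with hHmat
  have hq := (Matrix.posSemidef_iff_dotProduct_mulVec.mp hH).2 y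
  -- componentwise description of Hmat *ᵥ y
  have hmv : ∀ k, Hmat.mulVec y k
      = A.mulVec y k + ((2 * β * ‖z k‖ ^ 2 : ℝ) : ℂ) * y k
        - ((2 * lam : ℝ) : ℂ) * y k := by
    intro k
    simp only [hHmat, Matrix.sub_mulVec, Matrix.add_mulVec, Matrix.smul_mulVec,
      Matrix.one_mulVec, Pi.sub_apply, Pi.add_apply, Pi.smul_apply, Complex.real_smul]
    rw [Matrix.mulVec_diagonal]
    push_cast
    ring
  have hconj : ∀ k, star (y k) * y k = ((‖y k‖ ^ 2 : ℝ) : ℂ) := by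
    intro k
    rw [Complex.star_def, mul_comm, Complex.mul_conj]
    rw [Complex.normSq_eq_norm_sq]
  have hform : star y ⬝ᵥ Hmat.mulVec y
      = star y ⬝ᵥ A.mulVec y
        + (∑ k, ((2 * β * (‖z k‖ ^ 2 * ‖y k‖ ^ 2) : ℝ) : ℂ))
        - (∑ k, ((2 * lam * ‖y k‖ ^ 2 : ℝ) : ℂ)) := by
    simp only [dotProduct, Pi.star_apply, RingHom.id_apply]
    rw [← Finset.sum_add_distrib, ← Finset.sum_sub_distrib]
    refine Finset.sum_congr rfl fun k _ => ?_
    have h1 := hconj k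
    rw [hmv k]
    push_cast at h1 ⊢
    linear_combination (2 * (β : ℂ) * (‖z k‖ : ℂ) ^ 2 - 2 * (lam : ℂ)) * h1
  -- take real parts
  have hq' : (0:ℝ) ≤ (star y ⬝ᵥ A.mulVec y).re
      + 2 * β * (∑ k, ‖z k‖ ^ 2 * ‖y k‖ ^ 2) - 2 * lam := by
    rw [Complex.le_def] at hq
    have h0 := hq.1
    rw [hform] at h0
    simp only [Complex.add_re, Complex.sub_re, Complex.re_sum, Complex.ofReal_re,
      Complex.zero_re] at h0
    have e1 : ∑ k, 2 * lam * ‖y k‖ ^ 2 = 2 * lam := by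
      rw [← Finset.mul_sum, hy, mul_one]
    have e2 : ∑ k, 2 * β * (‖z k‖ ^ 2 * ‖y k‖ ^ 2)
        = 2 * β * ∑ k, ‖z k‖ ^ 2 * ‖y k‖ ^ 2 := by rw [Finset.mul_sum]
    linarith [h0, e1.symm ▸ h0]
  -- value at z
  have hzA : (star z ⬝ᵥ A.mulVec z).re = 2 * lam - 2 * β * ∑ k, ‖z k‖ ^ 4 := by
    rw [hlam]; ring
  -- sum of squares inequality
  have key : (0:ℝ) ≤ ∑ k, (‖y k‖ ^ 2 - ‖z k‖ ^ 2) ^ 2 :=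
    Finset.sum_nonneg fun k _ => sq_nonneg _
  have expand : ∑ k, (‖y k‖ ^ 2 - ‖z k‖ ^ 2) ^ 2
      = ∑ k, ‖y k‖ ^ 4 - 2 * ∑ k, (‖z k‖ ^ 2 * ‖y k‖ ^ 2) + ∑ k, ‖z k‖ ^ 4 := by
    have h : ∀ k ∈ Finset.univ, (‖y k‖ ^ 2 - ‖z k‖ ^ 2) ^ 2
        = ‖y k‖ ^ 4 - 2 * (‖z k‖ ^ 2 * ‖y k‖ ^ 2) + ‖z k‖ ^ 4 := fun k _ => by ring
    rw [Finset.sum_congr rfl h, Finset.sum_add_distrib, Finset.sum_sub_distrib,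
      Finset.mul_sum]
  rw [hzA]
  nlinarith [key, expand, hβ.le]
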